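/- arXiv:1802.06372 — 2 statements merged into one kernel-verified Lean document; each statement's English description precedes it below -/
import Mathlib

section
/- (L^q local Lipschitz estimate for the modified nonlinearity via L^{3q} norms.) Let (O, μ) be a measure space with μ(O) < ∞, let q ∈ [1, ∞), and let δt₀ ∈ (0,1). There exists a constant C = C(δt₀, q, μ(O)) ∈ (0,∞) such that for every δt ∈ [0, δt₀] and all measurable functions u, v : O → ℝ with finite L^{3q}(μ) norms, ‖Ψ_{δt}∘u − Ψ_{δt}∘v‖_{L^q(μ)} ≤ C·‖u − v‖_{L^{3q}(μ)}·(1 + ‖u‖_{L^{3q}(μ)}² + ‖v‖_{L^{3q}(μ)}²). -/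
open MeasureTheory ENNReal

/-- The drift nonlinearity `F(z) = z - z³`. -/
noncomputable def F (z : ℝ) : ℝ := z - z ^ 3

/-- The flow map `Φ_t(z) = z / sqrt(z² + (1 - z²) exp(-2t))`. -/
noncomputable def Phi (t z : ℝ) : ℝ :=
  z / Real.sqrt (z ^ 2 + (1 - z ^ 2) * Real.exp (-2 * t))

/-- The modified nonlinearity `Ψ_{δt}(z) = (Φ_{δt}(z) - z)/δt` for `δt > 0`, `Ψ_0 = F`. -/
noncomputable def Psi (δt z : ℝ) : ℝ :=
  if δt = 0 then F z else (Phi δt z - z) / δt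

set_option maxHeartbeats 1000000 in
lemma key_ineq_abs {δt ε z D s t : ℝ} (hδt : 0 < δt) (hε9 : 1/9 ≤ ε) (hε1 : ε < 1)
    (hlow : 1 - 2*δt ≤ ε) (hDdef : D = z^2 + (1-z^2)*ε)
    (hs2 : s^2 = D) (hspos : 0 < s) (ht2 : t^2 = ε) (htpos : 0 < t) (hts : t ≤ s) :
    |ε - s*D| ≤ 100 * (1 + z^2) * δt * (s*D) := by
  have hεpos : 0 < ε := by linarith
  have hεD : ε ≤ D := by nlinarith [sq_nonneg z]
  have hDpos : 0 < D := lt_of_lt_of_le hεpos hεD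
  have hsDpos : 0 < s * D := mul_pos hspos hDpos
  rcases le_or_gt (z^2) 1 with hz | hz
  · -- small z case
    have hD1 : D ≤ 1 := by nlinarith
    have hs1 : s ≤ 1 := by nlinarith [sq_nonneg (s-1)]
    have ht3 : 1/3 ≤ t := by nlinarith [sq_nonneg (t - 1/3), htpos]
    have ht1 : t ≤ 1 := by nlinarith [sq_nonneg (t-1)]
    have hlb : 1/27 ≤ s * D := by
      have h := mul_le_mul ht3 (le_trans hε9 hεD) (by norm_num) (by linarith)
      have h' := mul_le_mul_of_nonneg_right hts hDpos.le
      linarith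
    have hprod : t * ε ≤ s * D := mul_le_mul hts hεD hεpos.le hspos.le
    have habs : |ε - s*D| ≤ 2*δt := by
      rw [abs_le]
      have h1 : (0:ℝ) ≤ (1-ε)*(1-t) := mul_nonneg (by linarith) (by linarith)
      have h2 : (0:ℝ) ≤ t*(1-t) := mul_nonneg htpos.le (by linarith)
      have h3 : s * D ≤ 1 := mul_le_one₀ hs1 hDpos.le hD1
      constructor
      · linarith
      · linarith [hprod, h1, h2, ht2]
    have hst1 : 2*δt ≤ 54*δt*(s*D) := by
      have h := mul_le_mul_of_nonneg_left hlb (show (0:ℝ) ≤ 54*δt by positivity)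
      linarith
    have hst2 : 54*δt*(s*D) ≤ 100*(1+z^2)*δt*(s*D) := by
      have h54 : (54:ℝ) ≤ 100*(1+z^2) := by nlinarith [sq_nonneg z]
      have h := mul_le_mul_of_nonneg_right h54 (show (0:ℝ) ≤ δt*(s*D) by positivity)
      linarith [h]
    linarith [habs, hst1, hst2]
  · -- large z case
    have hD1 : 1 ≤ D := by
      nlinarith [mul_nonneg (by linarith : (0:ℝ) ≤ 1 - ε) (by linarith : (0:ℝ) ≤ z^2 - 1)]
    have hs1 : 1 ≤ s := by nlinarith [hspos]
    have hsD1 : 1 ≤ s * D := by nlinarith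
    have habs : |ε - s*D| = s*D - ε := by
      rw [abs_of_nonpos (by nlinarith)]; ring
    rw [habs]
    have haux : s*D - 1 ≤ (3/2)*(D-1)*(s*D) := by
      have hc : (0:ℝ) ≤ 3*s^3 + 6*s^2 + 4*s + 2 := by positivity
      nlinarith [mul_nonneg (sq_nonneg (s-1)) hc]
    have h3 : (D-1)*(s*D) ≤ (2*δt*z^2)*(s*D) := by
      apply mul_le_mul_of_nonneg_right _ hsDpos.le
      nlinarith [mul_le_mul_of_nonneg_right (show 1 - ε ≤ 2*δt by linarith)
          (show (0:ℝ) ≤ z^2 - 1 by linarith)]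
    have h4 : 2*δt ≤ 2*δt*(s*D) := by nlinarith
    have hA : 0 ≤ δt*z^2*(s*D) := by positivity
    have hB : 0 ≤ δt*(s*D) := by positivity
    nlinarith [haux, h3, h4, hA, hB, hz.le, hδt.le]

/-- Core algebraic inequality. -/
lemma key_ineq {δt ε z : ℝ} (hδt : 0 < δt) (hε9 : 1/9 ≤ ε) (hε1 : ε < 1)
    (hlow : 1 - 2*δt ≤ ε) :
    |ε / (Real.sqrt (z^2 + (1-z^2)*ε) * (z^2 + (1-z^2)*ε)) - 1| ≤ 100 * (1 + z^2) * δt := by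
  have hεpos : 0 < ε := by linarith
  have hDpos : 0 < z^2 + (1-z^2)*ε := by nlinarith [sq_nonneg z]
  have hsDpos : 0 < Real.sqrt (z^2 + (1-z^2)*ε) * (z^2 + (1-z^2)*ε) :=
    mul_pos (Real.sqrt_pos.mpr hDpos) hDpos
  rw [div_sub_one hsDpos.ne', abs_div, abs_of_pos hsDpos, div_le_iff₀ hsDpos]
  exact key_ineq_abs hδt hε9 hε1 hlow rfl (Real.sq_sqrt hDpos.le)
    (Real.sqrt_pos.mpr hDpos) (Real.sq_sqrt hεpos.le) (Real.sqrt_pos.mpr hεpos)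
    (Real.sqrt_le_sqrt (by nlinarith [sq_nonneg z]))


lemma D_pos {t : ℝ} (ht : 0 ≤ t) (z : ℝ) :
    0 < z ^ 2 + (1 - z ^ 2) * Real.exp (-2 * t) := by
  have h1 : 0 < Real.exp (-2*t) := Real.exp_pos _
  have h2 : Real.exp (-2*t) ≤ 1 := Real.exp_le_one_iff.mpr (by linarith)
  nlinarith [sq_nonneg z]

lemma hasDerivAt_Phi {t : ℝ} (ht : 0 ≤ t) (z : ℝ) :
    HasDerivAt (Phi t)
      (Real.exp (-2*t) / (Real.sqrt (z ^ 2 + (1 - z ^ 2) * Real.exp (-2 * t)) *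
        (z ^ 2 + (1 - z ^ 2) * Real.exp (-2 * t)))) z := by
  set ε : ℝ := Real.exp (-2*t) with hε
  have hD : 0 < z ^ 2 + (1 - z ^ 2) * ε := D_pos ht z
  set D : ℝ := z ^ 2 + (1 - z ^ 2) * ε with hDdef
  have hs : 0 < Real.sqrt D := Real.sqrt_pos.mpr hD
  have hs2 : Real.sqrt D ^ 2 = D := Real.sq_sqrt hD.le
  have hg : HasDerivAt (fun w : ℝ => w ^ 2 + (1 - w ^ 2) * ε) (2*z*(1-ε)) z := by
    have h1 : HasDerivAt (fun w : ℝ => w ^ 2) (2*z) z := by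
      simpa using hasDerivAt_pow 2 z
    have h2 := ((hasDerivAt_const z (1:ℝ)).sub h1).mul_const ε
    have := h1.add h2
    refine this.congr_deriv ?_
    ring
  have hsq : HasDerivAt (fun w : ℝ => Real.sqrt (w ^ 2 + (1 - w ^ 2) * ε))
      (2*z*(1-ε) / (2 * Real.sqrt D)) z := hg.sqrt hD.ne'
  have hdiv := (hasDerivAt_id z).div hsq hs.ne'
  refine hdiv.congr_deriv (Eq.symm ?_)
  rw [id_eq, ← hDdef]
  rw [div_eq_div_iff (by positivity) (by positivity)]
  field_simp
  linear_combination (ε - D) * hs2 - D * hDdef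

lemma sq_le_of_mem_uIcc {a b x : ℝ} (h : x ∈ Set.uIcc a b) : x^2 ≤ a^2 + b^2 := by
  rw [Set.mem_uIcc] at h
  rcases h with ⟨h1, h2⟩ | ⟨h1, h2⟩ <;>
    nlinarith [mul_nonneg (sub_nonneg.2 h1) (sub_nonneg.2 h2), sq_nonneg (a-b), sq_nonneg (a+b)]

lemma exp_facts {δt δt₀ : ℝ} (h₀ : δt₀ ∈ Set.Ioo (0:ℝ) 1) (hpos : 0 < δt) (hle : δt ≤ δt₀) :
    1/9 ≤ Real.exp (-2*δt) ∧ Real.exp (-2*δt) < 1 ∧ 1 - 2*δt ≤ Real.exp (-2*δt) := by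
  refine ⟨?_, ?_, ?_⟩
  · have h2 : Real.exp 2 < 9 := by
      have h := Real.exp_one_lt_d9
      have he : Real.exp 2 = Real.exp 1 * Real.exp 1 := by rw [← Real.exp_add]; norm_num
      nlinarith [Real.exp_pos 1]
    have hmono : Real.exp (-2) ≤ Real.exp (-2*δt) := by
      apply Real.exp_le_exp.mpr; nlinarith [h₀.2]
    have : (1:ℝ)/9 ≤ Real.exp (-2) := by
      have hm : Real.exp (-2) * Real.exp 2 = 1 := by rw [← Real.exp_add]; norm_num
      nlinarith [Real.exp_pos (-2)]
    linarith
  · exact Real.exp_lt_one_iff.mpr (by linarith)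
  · linarith [Real.add_one_le_exp (-2*δt)]

lemma psi_pointwise {δt₀ : ℝ} (h₀ : δt₀ ∈ Set.Ioo (0:ℝ) 1) {δt : ℝ}
    (hδt : δt ∈ Set.Icc (0:ℝ) δt₀) (a b : ℝ) :
    |Psi δt a - Psi δt b| ≤ 100 * (1 + a^2 + b^2) * |a - b| := by
  rcases eq_or_lt_of_le hδt.1 with h0 | hpos
  · -- δt = 0
    simp only [Psi, if_pos h0.symm]
    have h : F a - F b = (1 - a^2 - a*b - b^2) * (a - b) := by simp only [F]; ring
    rw [h, abs_mul]
    apply mul_le_mul_of_nonneg_right _ (abs_nonneg _)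
    rw [abs_le]
    constructor <;> nlinarith [sq_nonneg (a+b), sq_nonneg (a-b)]
  · -- δt > 0
    have hne : δt ≠ 0 := hpos.ne'
    obtain ⟨hε9, hε1, hlow⟩ := exp_facts h₀ hpos hδt.2
    set f' : ℝ → ℝ := fun z =>
      (Real.exp (-2*δt) / (Real.sqrt (z^2 + (1-z^2)*Real.exp (-2*δt)) *
        (z^2 + (1-z^2)*Real.exp (-2*δt))) - 1) / δt with hf'def
    have hfun : (fun w => Psi δt w) = fun w => (Phi δt w - w) / δt := by
      funext w; simp [Psi, hne]
    have H : ∀ z : ℝ, HasDerivAt (fun w => Psi δt w) (f' z) z := by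
      intro z
      rw [hfun]
      have h1 := ((hasDerivAt_Phi hpos.le z).sub (hasDerivAt_id z)).div_const δt
      exact h1
    have bound : ∀ x ∈ Set.uIcc a b, ‖f' x‖ ≤ 100 * (1 + a^2 + b^2) := by
      intro x hx
      have hk := key_ineq (z := x) hpos hε9 hε1 hlow
      have hx2 : x^2 ≤ a^2 + b^2 := sq_le_of_mem_uIcc hx
      rw [Real.norm_eq_abs, hf'def]
      rw [abs_div, abs_of_pos hpos, div_le_iff₀ hpos]
      calc |Real.exp (-2*δt) / (Real.sqrt (x^2 + (1-x^2)*Real.exp (-2*δt)) *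
              (x^2 + (1-x^2)*Real.exp (-2*δt))) - 1| ≤ 100 * (1 + x^2) * δt := hk
        _ ≤ 100 * (1 + a^2 + b^2) * δt := by nlinarith
    have hmvt := (convex_uIcc a b).norm_image_sub_le_of_norm_hasDerivWithin_le
      (fun x _ => (H x).hasDerivWithinAt) bound Set.left_mem_uIcc Set.right_mem_uIcc
    rw [Real.norm_eq_abs, Real.norm_eq_abs] at hmvt
    calc |Psi δt a - Psi δt b| = |Psi δt b - Psi δt a| := abs_sub_comm _ _
      _ ≤ 100 * (1 + a^2 + b^2) * |b - a| := hmvt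
      _ = 100 * (1 + a^2 + b^2) * |a - b| := by rw [abs_sub_comm]

/-- `L^q` local Lipschitz estimate for the modified nonlinearity via `L^{3q}` norms:
on a finite measure space, for `q ∈ [1,∞)` and `δt₀ ∈ (0,1)` there is
`C = C(δt₀, q, μ(O)) > 0` such that for all `δt ∈ [0, δt₀]` and all measurable
`u, v` with finite `L^{3q}` norms,
`‖Ψ_{δt}∘u - Ψ_{δt}∘v‖_{L^q} ≤ C ‖u - v‖_{L^{3q}} (1 + ‖u‖_{L^{3q}}² + ‖v‖_{L^{3q}}²)`. -/
theorem psi_Lq_local_lipschitz {O : Type*} [MeasurableSpace O] (μ : Measure O)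
    [IsFiniteMeasure μ] (q : ℝ) (hq : 1 ≤ q) (δt₀ : ℝ) (h₀ : δt₀ ∈ Set.Ioo (0 : ℝ) 1) :
    ∃ C : ℝ, 0 < C ∧ ∀ δt ∈ Set.Icc (0 : ℝ) δt₀, ∀ u v : O → ℝ,
      Measurable u → Measurable v →
      eLpNorm u (ENNReal.ofReal (3 * q)) μ < ⊤ →
      eLpNorm v (ENNReal.ofReal (3 * q)) μ < ⊤ →
      eLpNorm (fun x => Psi δt (u x) - Psi δt (v x)) (ENNReal.ofReal q) μ
        ≤ ENNReal.ofReal C * eLpNorm (fun x => u x - v x) (ENNReal.ofReal (3 * q)) μ *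
          (1 + eLpNorm u (ENNReal.ofReal (3 * q)) μ ^ 2 +
            eLpNorm v (ENNReal.ofReal (3 * q)) μ ^ 2) := by
  have hq0 : 0 < q := lt_of_lt_of_le one_pos hq
  set P : ℝ≥0∞ := ENNReal.ofReal q with hP
  set R : ℝ≥0∞ := ENNReal.ofReal (3*q) with hR
  set S : ℝ≥0∞ := ENNReal.ofReal (3*q/2) with hS
  have hS1 : 1 ≤ S := ENNReal.one_le_ofReal.mpr (by linarith)
  have hpqr : 1/P = 1/S + 1/R := by
    rw [hP, hS, hR, one_div, one_div, one_div,
      ← ENNReal.ofReal_inv_of_pos hq0,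
      ← ENNReal.ofReal_inv_of_pos (by linarith : (0:ℝ) < 3*q/2),
      ← ENNReal.ofReal_inv_of_pos (by linarith : (0:ℝ) < 3*q),
      ← ENNReal.ofReal_add (by positivity) (by positivity)]
    congr 1
    field_simp
    ring
  set m : ℝ≥0∞ := eLpNorm (fun _ : O => (1:ℝ)) S μ with hm
  have hm_ne : m ≠ ⊤ := (memLp_const (1:ℝ)).eLpNorm_ne_top
  refine ⟨100 * (1 + m.toReal), by positivity, ?_⟩
  intro δt hδt u v hu hv hufin hvfin
  set Nu : ℝ≥0∞ := eLpNorm u R μ with hNu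
  set Nv : ℝ≥0∞ := eLpNorm v R μ with hNv
  set Nw : ℝ≥0∞ := eLpNorm (fun x => u x - v x) R μ with hNw
  set φ : O → ℝ := fun x => 100*(1 + (u x)^2 + (v x)^2) with hφ
  set w : O → ℝ := fun x => |u x - v x| with hw
  have hφm : AEStronglyMeasurable φ μ :=
    (((measurable_const.add ((hu.pow_const 2))).add (hv.pow_const 2)).const_mul
      (100:ℝ)).aestronglyMeasurable
  have hwm : AEStronglyMeasurable w μ := ((hu.sub hv).abs).aestronglyMeasurable
  -- step 3 : norm of w
  have hwnorm : eLpNorm w R μ = Nw := by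
    rw [hw, hNw]
    have : (fun x => |u x - v x|) = fun x => ‖u x - v x‖ := by
      funext x; rw [Real.norm_eq_abs]
    rw [this, eLpNorm_norm]
  -- square norms
  have husq : eLpNorm (fun x => (u x)^2) S μ = Nu^2 := by
    have h1 : (fun x => (u x)^2) = fun x => ‖u x‖ ^ (2:ℝ) := by
      funext x
      rw [Real.norm_eq_abs, show (2:ℝ) = ((2:ℕ):ℝ) by norm_num, Real.rpow_natCast, sq_abs]
    rw [h1, eLpNorm_norm_rpow u (by norm_num : (0:ℝ) < 2)]
    rw [hS, ← ENNReal.ofReal_mul (by positivity : (0:ℝ) ≤ 3*q/2),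
      show 3*q/2*2 = 3*q by ring, ← hR, ← hNu]
    rw [show (2:ℝ) = ((2:ℕ):ℝ) by norm_num, ENNReal.rpow_natCast]
  have hvsq : eLpNorm (fun x => (v x)^2) S μ = Nv^2 := by
    have h1 : (fun x => (v x)^2) = fun x => ‖v x‖ ^ (2:ℝ) := by
      funext x
      rw [Real.norm_eq_abs, show (2:ℝ) = ((2:ℕ):ℝ) by norm_num, Real.rpow_natCast, sq_abs]
    rw [h1, eLpNorm_norm_rpow v (by norm_num : (0:ℝ) < 2)]
    rw [hS, ← ENNReal.ofReal_mul (by positivity : (0:ℝ) ≤ 3*q/2),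
      show 3*q/2*2 = 3*q by ring, ← hR, ← hNv]
    rw [show (2:ℝ) = ((2:ℕ):ℝ) by norm_num, ENNReal.rpow_natCast]
  -- step 4 : bound on eLpNorm φ
  have hφbound : eLpNorm φ S μ ≤ ENNReal.ofReal 100 * (m + Nu^2 + Nv^2) := by
    set ψ : O → ℝ := fun x => 1 + (u x)^2 + (v x)^2 with hψ
    have hsmul : φ = (100:ℝ) • ψ := by
      funext x; simp [hφ, hψ, smul_eq_mul]
    rw [hsmul, eLpNorm_const_smul, Real.enorm_eq_ofReal (by norm_num : (0:ℝ) ≤ 100)]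
    refine mul_le_mul_right ?_ _
    have hadd1 : eLpNorm ψ S μ ≤
        eLpNorm (fun x => 1 + (u x)^2) S μ + eLpNorm (fun x => (v x)^2) S μ := by
      have h := eLpNorm_add_le (μ := μ)
        (f := fun x => 1 + (u x)^2) (g := fun x => (v x)^2)
        ((measurable_const.add (hu.pow_const 2)).aestronglyMeasurable)
        ((hv.pow_const 2).aestronglyMeasurable) hS1
      exact h
    have hadd2 : eLpNorm (fun x => 1 + (u x)^2) S μ ≤
        m + eLpNorm (fun x => (u x)^2) S μ := by
      have h := eLpNorm_add_le (μ := μ)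
        (f := fun _ : O => (1:ℝ)) (g := fun x => (u x)^2)
        measurable_const.aestronglyMeasurable
        ((hu.pow_const 2).aestronglyMeasurable) hS1
      exact h
    calc eLpNorm ψ S μ
        ≤ eLpNorm (fun x => 1 + (u x)^2) S μ + eLpNorm (fun x => (v x)^2) S μ := hadd1
      _ ≤ (m + eLpNorm (fun x => (u x)^2) S μ) + eLpNorm (fun x => (v x)^2) S μ :=
          add_le_add_left hadd2 _
      _ = m + Nu^2 + Nv^2 := by rw [husq, hvsq]
  -- pointwise bound and Hölder
  have hpoint : ∀ x, ‖Psi δt (u x) - Psi δt (v x)‖ ≤ φ x * w x := by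
    intro x
    rw [Real.norm_eq_abs]
    have h := psi_pointwise h₀ hδt (u x) (v x)
    calc |Psi δt (u x) - Psi δt (v x)| ≤ 100 * (1 + (u x)^2 + (v x)^2) * |u x - v x| := h
      _ = φ x * w x := rfl
  have hholder : eLpNorm (fun x => φ x * w x) P μ ≤ eLpNorm φ S μ * eLpNorm w R μ := by
    have h := eLpNorm_smul_le_mul_eLpNorm (f := w) (φ := φ) hwm hφm (hpqr := ⟨by simpa only [one_div] using hpqr.symm⟩)
    exact h
  have hmain : eLpNorm (fun x => Psi δt (u x) - Psi δt (v x)) P μ ≤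
      (ENNReal.ofReal 100 * (m + Nu^2 + Nv^2)) * Nw := by
    calc eLpNorm (fun x => Psi δt (u x) - Psi δt (v x)) P μ
        ≤ eLpNorm (fun x => φ x * w x) P μ := eLpNorm_mono_real hpoint
      _ ≤ eLpNorm φ S μ * eLpNorm w R μ := hholder
      _ = eLpNorm φ S μ * Nw := by rw [hwnorm]
      _ ≤ (ENNReal.ofReal 100 * (m + Nu^2 + Nv^2)) * Nw := mul_le_mul_left hφbound _
  -- final constant manipulation
  have hofC : ENNReal.ofReal (100 * (1 + m.toReal)) = ENNReal.ofReal 100 * (1 + m) := by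
    rw [ENNReal.ofReal_mul (by norm_num : (0:ℝ) ≤ 100),
      ENNReal.ofReal_add (by norm_num) ENNReal.toReal_nonneg,
      ENNReal.ofReal_one, ENNReal.ofReal_toReal hm_ne]
  have hdist : m + Nu^2 + Nv^2 ≤ (1 + m) * (1 + Nu^2 + Nv^2) := by
    have hexp : (1 + m) * (1 + Nu^2 + Nv^2)
        = (m + Nu^2 + Nv^2) + (1 + m*Nu^2 + m*Nv^2) := by ring
    rw [hexp]
    exact le_add_right le_rfl
  refine hmain.trans ?_
  rw [hofC]
  calc (ENNReal.ofReal 100 * (m + Nu^2 + Nv^2)) * Nw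
      ≤ (ENNReal.ofReal 100 * ((1 + m) * (1 + Nu^2 + Nv^2))) * Nw := by
        exact mul_le_mul_left (mul_le_mul_right hdist _) _
    _ = ENNReal.ofReal 100 * (1 + m) * Nw * (1 + Nu^2 + Nv^2) := by ring
end

section
/- (L^q local Lipschitz estimate for the modified nonlinearity via essential supremum norms.) Let (O, μ) be a measure space and let δt₀ ∈ (0,1), q ∈ [1, ∞). There exists a constant C = C(δt₀) ∈ (0,∞) such that for every δt ∈ [0, δt₀] and all measurable functions u, v : O → ℝ with finite essential supremum norms, ‖Ψ_{δt}∘u − Ψ_{δt}∘v‖_{L^q(μ)} ≤ C·‖u − v‖_{L^q(μ)}·(1 + ‖u‖_{L^∞(μ)}² + ‖v‖_{L^∞(μ)}²). -/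
open MeasureTheory
open scoped ENNReal NNReal

lemma phi_hasDerivAt (δt z : ℝ) (hδt : 0 < δt) :
    HasDerivAt (fun y => Phi δt y)
      (Real.exp (-2 * δt) /
        ((z ^ 2 + (1 - z ^ 2) * Real.exp (-2 * δt)) *
          Real.sqrt (z ^ 2 + (1 - z ^ 2) * Real.exp (-2 * δt)))) z := by
  set ε := Real.exp (-2 * δt) with hεdef
  have hεpos : 0 < ε := Real.exp_pos _
  have hε1 : ε ≤ 1 := Real.exp_le_one_iff.2 (by linarith)
  have hg : 0 < z ^ 2 + (1 - z ^ 2) * ε := by nlinarith [sq_nonneg z]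
  have hG : 0 < Real.sqrt (z ^ 2 + (1 - z ^ 2) * ε) := Real.sqrt_pos.2 hg
  have hGsq : Real.sqrt (z ^ 2 + (1 - z ^ 2) * ε) ^ 2 = z ^ 2 + (1 - z ^ 2) * ε :=
    Real.sq_sqrt hg.le
  have hp : HasDerivAt (fun y : ℝ => y ^ 2) (2 * z) z := by
    simpa using hasDerivAt_pow 2 z
  have h1 : HasDerivAt (fun y => y ^ 2 + (1 - y ^ 2) * ε) (2 * z + -(2 * z) * ε) z :=
    hp.add ((hp.const_sub 1).mul_const ε)
  have h2 : HasDerivAt (fun y => Real.sqrt (y ^ 2 + (1 - y ^ 2) * ε))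
      ((2 * z + -(2 * z) * ε) / (2 * Real.sqrt (z ^ 2 + (1 - z ^ 2) * ε))) z :=
    h1.sqrt hg.ne'
  have h3 := (hasDerivAt_id z).div h2 hG.ne'
  have key : (1 * Real.sqrt (z ^ 2 + (1 - z ^ 2) * ε) -
        z * ((2 * z + -(2 * z) * ε) / (2 * Real.sqrt (z ^ 2 + (1 - z ^ 2) * ε)))) /
        Real.sqrt (z ^ 2 + (1 - z ^ 2) * ε) ^ 2
      = ε / ((z ^ 2 + (1 - z ^ 2) * ε) * Real.sqrt (z ^ 2 + (1 - z ^ 2) * ε)) := by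
    rw [hGsq]
    field_simp
    linear_combination hGsq
  simp only [id_eq] at h3
  rw [key] at h3
  exact h3

lemma psi_hasDerivAt (δt z : ℝ) (hδt : 0 < δt) :
    HasDerivAt (Psi δt)
      ((Real.exp (-2 * δt) /
        ((z ^ 2 + (1 - z ^ 2) * Real.exp (-2 * δt)) *
          Real.sqrt (z ^ 2 + (1 - z ^ 2) * Real.exp (-2 * δt))) - 1) / δt) z := by
  have h := ((phi_hasDerivAt δt z hδt).sub (hasDerivAt_id z)).div_const δt
  have hps : Psi δt = fun y => (Phi δt y - y) / δt := by
    funext y; simp [Psi, hδt.ne']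
  rw [hps]
  simpa using h

set_option maxHeartbeats 1000000 in

lemma abs_aux (ε c δt z g G : ℝ) (hc : 0 < c) (hcε : c ≤ ε) (hε1 : ε ≤ 1) (hc1 : c ≤ 1)
    (hgdef : g = z ^ 2 + (1 - z ^ 2) * ε) (hG0 : 0 < G) (hGsq : G ^ 2 = g) (hcG : c ≤ G)
    (hδt : 0 < δt) (hs : 1 - ε ≤ 2 * δt) :
    |(ε / (g * G) - 1) / δt| ≤ 4 / c ^ 2 * (1 + z ^ 2) := by
  have hε0 : 0 < ε := lt_of_lt_of_le hc hcε
  have hεg : ε ≤ g := by nlinarith [sq_nonneg z]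
  have hg0 : 0 < g := lt_of_lt_of_le hε0 hεg
  have hs0 : (0:ℝ) ≤ 1 - ε := by linarith
  have h1G : (0:ℝ) < 1 + G := by linarith
  have hA : |ε - g| = (1 - ε) * z ^ 2 := by
    rw [hgdef, abs_of_nonpos (by nlinarith [sq_nonneg z])]; ring
  have hB : |1 - G| * (1 + G) ≤ (1 - ε) * (1 + z ^ 2) := by
    have h1 : |1 - G| * (1 + G) = |1 - g| := by
      rw [← abs_of_pos h1G, ← abs_mul, ← hGsq]
      congr 1; ring
    rw [h1, hgdef]
    have h2 : 1 - (z ^ 2 + (1 - z ^ 2) * ε) = (1 - ε) * (1 - z ^ 2) := by ring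
    rw [h2, abs_mul, abs_of_nonneg hs0]
    have h3 : |1 - z ^ 2| ≤ 1 + z ^ 2 := by
      rw [abs_le]; constructor <;> nlinarith [sq_nonneg z]
    nlinarith [hs0]
  have htri : |ε - g * G| ≤ |ε - g| + g * |1 - G| := by
    have h4 : ε - g * G = (ε - g) + g * (1 - G) := by ring
    rw [h4]
    refine (abs_add_le _ _).trans ?_
    rw [abs_mul, abs_of_pos hg0]
  have main : |ε - g * G| * (1 + G) ≤ (1 - ε) * z ^ 2 * (1 + G) + g * ((1 - ε) * (1 + z ^ 2)) := by
    have h5 := mul_le_mul_of_nonneg_right htri h1G.le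
    nlinarith [hB, hA, h5, mul_le_mul_of_nonneg_left hB hg0.le]
  have hc2gG : c ^ 2 ≤ g * G := by nlinarith
  have hc2G : c ^ 2 ≤ G * (1 + G) := by nlinarith
  have t1 : (1 - ε) * z ^ 2 * (1 + G) * c ^ 2 ≤ 2 * δt * (1 + z ^ 2) * (1 + G) * (g * G) := by
    have h1 : (1 - ε) * z ^ 2 ≤ 2 * δt * (1 + z ^ 2) := by nlinarith [sq_nonneg z]
    have h2 := mul_le_mul (mul_le_mul h1 le_rfl h1G.le (by positivity)) hc2gG (by positivity)
      (by positivity)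
    linarith [h2]
  have t2 : g * ((1 - ε) * (1 + z ^ 2)) * c ^ 2 ≤ 2 * δt * (1 + z ^ 2) * (1 + G) * (g * G) := by
    have h1 : (1 - ε) * c ^ 2 ≤ 2 * δt * (G * (1 + G)) :=
      mul_le_mul hs hc2G (by positivity) (by positivity)
    have h2 := mul_le_mul_of_nonneg_right h1 (show (0:ℝ) ≤ g * (1 + z ^ 2) by positivity)
    linarith [h2]
  have main2 : |ε - g * G| * (1 + G) * c ^ 2 ≤ 4 * δt * (1 + z ^ 2) * (g * G) * (1 + G) := by
    have h := mul_le_mul_of_nonneg_right main (sq_nonneg c)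
    nlinarith [t1, t2, h]
  have heq : (ε / (g * G) - 1) / δt = (ε - g * G) / (g * G * δt) := by
    rw [div_sub_one (by positivity : (g * G : ℝ) ≠ 0), div_div]
  have hpos : (0:ℝ) < g * G * δt := by positivity
  rw [heq, abs_div, abs_of_pos hpos, div_le_iff₀ hpos]
  have expand : 4 / c ^ 2 * (1 + z ^ 2) * (g * G * δt)
      = 4 * δt * (1 + z ^ 2) * (g * G) / c ^ 2 := by ring
  have hc2 : (0:ℝ) < c ^ 2 := by positivity
  rw [expand, le_div_iff₀ hc2]
  have hfin := (mul_le_mul_iff_of_pos_right h1G).1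
    (show |ε - g * G| * c ^ 2 * (1 + G) ≤ 4 * δt * (1 + z ^ 2) * (g * G) * (1 + G) by
      linarith [main2])
  linarith [hfin]


lemma psi_deriv_bound (δt₀ δt z : ℝ) (h1 : 0 < δt) (h2 : δt ≤ δt₀) :
    |(Real.exp (-2 * δt) /
        ((z ^ 2 + (1 - z ^ 2) * Real.exp (-2 * δt)) *
          Real.sqrt (z ^ 2 + (1 - z ^ 2) * Real.exp (-2 * δt))) - 1) / δt|
      ≤ 4 / Real.exp (-2 * δt₀) ^ 2 * (1 + z ^ 2) := by
  have hε0 : 0 < Real.exp (-2 * δt) := Real.exp_pos _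
  have hε1 : Real.exp (-2 * δt) ≤ 1 := Real.exp_le_one_iff.2 (by linarith)
  have hc0 : 0 < Real.exp (-2 * δt₀) := Real.exp_pos _
  have hcε : Real.exp (-2 * δt₀) ≤ Real.exp (-2 * δt) := Real.exp_le_exp.2 (by linarith)
  have hc1 : Real.exp (-2 * δt₀) ≤ 1 := Real.exp_le_one_iff.2 (by linarith)
  have hg0 : 0 < z ^ 2 + (1 - z ^ 2) * Real.exp (-2 * δt) := by nlinarith [sq_nonneg z]
  have hG0 : 0 < Real.sqrt (z ^ 2 + (1 - z ^ 2) * Real.exp (-2 * δt)) := Real.sqrt_pos.2 hg0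
  have hGsq : Real.sqrt (z ^ 2 + (1 - z ^ 2) * Real.exp (-2 * δt)) ^ 2
      = z ^ 2 + (1 - z ^ 2) * Real.exp (-2 * δt) := Real.sq_sqrt hg0.le
  have hcG : Real.exp (-2 * δt₀) ≤ Real.sqrt (z ^ 2 + (1 - z ^ 2) * Real.exp (-2 * δt)) := by
    nlinarith [sq_nonneg z, hGsq, hG0, Real.sqrt_nonneg (z ^ 2 + (1 - z ^ 2) * Real.exp (-2 * δt))]
  have hs : 1 - Real.exp (-2 * δt) ≤ 2 * δt := by
    have := Real.add_one_le_exp (-2 * δt); linarith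
  exact abs_aux (Real.exp (-2 * δt)) (Real.exp (-2 * δt₀)) δt z _ _ hc0 hcε hε1 hc1 rfl hG0 hGsq
    hcG h1 hs

lemma psi_lip (δt₀ : ℝ) (h₀ : δt₀ ∈ Set.Ioo (0:ℝ) 1) (δt : ℝ) (hδt : δt ∈ Set.Icc (0:ℝ) δt₀)
    (a b : ℝ) :
    |Psi δt a - Psi δt b| ≤ 4 / Real.exp (-2 * δt₀) ^ 2 * (1 + a ^ 2 + b ^ 2) * |a - b| := by
  have hc0 : 0 < Real.exp (-2 * δt₀) := Real.exp_pos _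
  have hc1 : Real.exp (-2 * δt₀) ≤ 1 := Real.exp_le_one_iff.2 (by nlinarith [h₀.1])
  have hC4 : (4:ℝ) ≤ 4 / Real.exp (-2 * δt₀) ^ 2 := by
    rw [le_div_iff₀ (by positivity)]
    nlinarith
  rcases eq_or_lt_of_le hδt.1 with h0 | h0
  · -- δt = 0
    have hP : ∀ y : ℝ, Psi δt y = y - y ^ 3 := by
      intro y; simp [Psi, ← h0, F]
    rw [hP, hP]
    have he : (a - a ^ 3) - (b - b ^ 3) = (a - b) * (1 - (a ^ 2 + a * b + b ^ 2)) := by ring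
    rw [he, abs_mul]
    have hb : |1 - (a ^ 2 + a * b + b ^ 2)| ≤ 4 / Real.exp (-2 * δt₀) ^ 2 * (1 + a ^ 2 + b ^ 2) := by
      rw [abs_le]
      constructor <;> nlinarith [sq_nonneg (a + b), sq_nonneg (a - b), hC4, sq_nonneg a, sq_nonneg b]
    calc |a - b| * |1 - (a ^ 2 + a * b + b ^ 2)|
        ≤ |a - b| * (4 / Real.exp (-2 * δt₀) ^ 2 * (1 + a ^ 2 + b ^ 2)) := by
          exact mul_le_mul_of_nonneg_left hb (abs_nonneg _)
      _ = 4 / Real.exp (-2 * δt₀) ^ 2 * (1 + a ^ 2 + b ^ 2) * |a - b| := by ring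
  · -- δt > 0
    have key := Convex.norm_image_sub_le_of_norm_hasDerivWithin_le
      (f := Psi δt)
      (f' := fun x => (Real.exp (-2 * δt) /
        ((x ^ 2 + (1 - x ^ 2) * Real.exp (-2 * δt)) *
          Real.sqrt (x ^ 2 + (1 - x ^ 2) * Real.exp (-2 * δt))) - 1) / δt)
      (s := Set.uIcc a b)
      (C := 4 / Real.exp (-2 * δt₀) ^ 2 * (1 + a ^ 2 + b ^ 2))
      (fun x _ => (psi_hasDerivAt δt x h0).hasDerivWithinAt)
      (fun x hx => by
        have hxb : x ^ 2 ≤ a ^ 2 + b ^ 2 := by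
          rcases Set.mem_uIcc.1 hx with ⟨h1, h2⟩ | ⟨h1, h2⟩ <;>
            nlinarith [mul_nonneg (sub_nonneg.2 h1) (sub_nonneg.2 h2), sq_nonneg (a + b - x)]
        have := psi_deriv_bound δt₀ δt x h0 hδt.2
        rw [Real.norm_eq_abs]
        refine this.trans ?_
        have h4pos : (0:ℝ) < 4 / Real.exp (-2 * δt₀) ^ 2 := by positivity
        nlinarith [h4pos, hxb])
      (convex_uIcc a b) (Set.right_mem_uIcc) (Set.left_mem_uIcc)
    simpa [Real.norm_eq_abs] using key
/-- `L^q` local Lipschitz estimate for the modified nonlinearity via essential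
supremum norms: for `δt₀ ∈ (0,1)` there is `C = C(δt₀) > 0` such that for every
`q ∈ [1,∞)`, every `δt ∈ [0, δt₀]` and all measurable `u, v` with finite essential
supremum norms,
`‖Ψ_{δt}∘u - Ψ_{δt}∘v‖_{L^q} ≤ C ‖u - v‖_{L^q} (1 + ‖u‖_{L^∞}² + ‖v‖_{L^∞}²)`. -/
theorem psi_Lq_lipschitz_sup_norm {O : Type*} [MeasurableSpace O] (μ : Measure O)
    (δt₀ : ℝ) (h₀ : δt₀ ∈ Set.Ioo (0 : ℝ) 1) :
    ∃ C : ℝ, 0 < C ∧ ∀ q : ℝ, 1 ≤ q → ∀ δt ∈ Set.Icc (0 : ℝ) δt₀, ∀ u v : O → ℝ,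
      Measurable u → Measurable v →
      eLpNorm u ⊤ μ < ⊤ → eLpNorm v ⊤ μ < ⊤ →
      eLpNorm (fun x => Psi δt (u x) - Psi δt (v x)) (ENNReal.ofReal q) μ
        ≤ ENNReal.ofReal C * eLpNorm (fun x => u x - v x) (ENNReal.ofReal q) μ *
          (1 + eLpNorm u ⊤ μ ^ 2 + eLpNorm v ⊤ μ ^ 2) := by
  have hc0 : 0 < Real.exp (-2 * δt₀) := Real.exp_pos _
  refine ⟨4 / Real.exp (-2 * δt₀) ^ 2, by positivity, ?_⟩
  intro q hq δt hδt u v hu hv hufin hvfin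
  set C : ℝ := 4 / Real.exp (-2 * δt₀) ^ 2 with hC
  set Mu := (eLpNorm u ⊤ μ).toReal with hMu
  set Mv := (eLpNorm v ⊤ μ).toReal with hMv
  have hCpos : 0 < C := by positivity
  have hMu0 : 0 ≤ Mu := ENNReal.toReal_nonneg
  have hMv0 : 0 ≤ Mv := ENNReal.toReal_nonneg
  have hau : ∀ᵐ x ∂μ, |u x| ≤ Mu := by
    filter_upwards [ae_le_eLpNormEssSup (f := u) (μ := μ)] with x hx
    have h1 : (‖u x‖₊ : ℝ≥0∞) ≤ eLpNorm u ⊤ μ := by rwa [eLpNorm_exponent_top]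
    have h2 := ENNReal.toReal_mono hufin.ne h1
    simpa [Real.norm_eq_abs, hMu] using h2
  have hav : ∀ᵐ x ∂μ, |v x| ≤ Mv := by
    filter_upwards [ae_le_eLpNormEssSup (f := v) (μ := μ)] with x hx
    have h1 : (‖v x‖₊ : ℝ≥0∞) ≤ eLpNorm v ⊤ μ := by rwa [eLpNorm_exponent_top]
    have h2 := ENNReal.toReal_mono hvfin.ne h1
    simpa [Real.norm_eq_abs, hMv] using h2
  have hpt : ∀ᵐ x ∂μ, ‖Psi δt (u x) - Psi δt (v x)‖
      ≤ ‖(C * (1 + Mu ^ 2 + Mv ^ 2)) * (u x - v x)‖ := by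
    filter_upwards [hau, hav] with x hxu hxv
    have hc' : (0:ℝ) ≤ C * (1 + Mu ^ 2 + Mv ^ 2) :=
      mul_nonneg hCpos.le (by positivity)
    rw [Real.norm_eq_abs, Real.norm_eq_abs, abs_mul, abs_of_nonneg hc']
    refine (psi_lip δt₀ h₀ δt hδt (u x) (v x)).trans ?_
    have h2 : (u x) ^ 2 ≤ Mu ^ 2 := by nlinarith [abs_nonneg (u x), sq_abs (u x)]
    have h3 : (v x) ^ 2 ≤ Mv ^ 2 := by nlinarith [abs_nonneg (v x), sq_abs (v x)]
    have h4 : C * (1 + (u x) ^ 2 + (v x) ^ 2) ≤ C * (1 + Mu ^ 2 + Mv ^ 2) := by nlinarith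
    exact mul_le_mul_of_nonneg_right h4 (abs_nonneg _)
  have hX : ENNReal.ofReal (1 + Mu ^ 2 + Mv ^ 2)
      ≤ 1 + eLpNorm u ⊤ μ ^ 2 + eLpNorm v ⊤ μ ^ 2 := by
    calc ENNReal.ofReal (1 + Mu ^ 2 + Mv ^ 2)
        ≤ ENNReal.ofReal (1 + Mu ^ 2) + ENNReal.ofReal (Mv ^ 2) := ENNReal.ofReal_add_le
      _ ≤ ENNReal.ofReal 1 + ENNReal.ofReal (Mu ^ 2) + ENNReal.ofReal (Mv ^ 2) := by
          gcongr; exact ENNReal.ofReal_add_le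
      _ = 1 + eLpNorm u ⊤ μ ^ 2 + eLpNorm v ⊤ μ ^ 2 := by
          rw [ENNReal.ofReal_one, ENNReal.ofReal_pow hMu0, ENNReal.ofReal_pow hMv0,
            hMu, hMv, ENNReal.ofReal_toReal hufin.ne, ENNReal.ofReal_toReal hvfin.ne]
  calc eLpNorm (fun x => Psi δt (u x) - Psi δt (v x)) (ENNReal.ofReal q) μ
      ≤ eLpNorm (fun x => (C * (1 + Mu ^ 2 + Mv ^ 2)) * (u x - v x)) (ENNReal.ofReal q) μ :=
        eLpNorm_mono_ae hpt
    _ = ‖C * (1 + Mu ^ 2 + Mv ^ 2)‖ₑ * eLpNorm (fun x => u x - v x) (ENNReal.ofReal q) μ := by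
        rw [show (fun x => (C * (1 + Mu ^ 2 + Mv ^ 2)) * (u x - v x))
            = (C * (1 + Mu ^ 2 + Mv ^ 2)) • (fun x => u x - v x) from rfl,
          eLpNorm_const_smul]
    _ = ENNReal.ofReal C * ENNReal.ofReal (1 + Mu ^ 2 + Mv ^ 2) *
          eLpNorm (fun x => u x - v x) (ENNReal.ofReal q) μ := by
        rw [Real.enorm_eq_ofReal (by positivity), ENNReal.ofReal_mul hCpos.le]
    _ ≤ ENNReal.ofReal C * (1 + eLpNorm u ⊤ μ ^ 2 + eLpNorm v ⊤ μ ^ 2) *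
          eLpNorm (fun x => u x - v x) (ENNReal.ofReal q) μ := by gcongr
    _ = ENNReal.ofReal C * eLpNorm (fun x => u x - v x) (ENNReal.ofReal q) μ *
          (1 + eLpNorm u ⊤ μ ^ 2 + eLpNorm v ⊤ μ ^ 2) := by ring
end
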